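/- arXiv:1901.02287 — 2 statements merged into one kernel-verified Lean document; each statement's English description precedes it below -/
import Mathlib

section
/- Let n ≥ 0 and let U ⊆ {0,…,2^n−1} be a shortening set that is upward closed under binary domination (j ∈ U, j ⪯ k, and k < 2^n imply k ∈ U), and let j < 2^n with j ∉ X_s(U). Then there exists a single index k with 0 ≤ k < 2^n and k ∉ U such that j ∈ X_s(U ∪ {k}) if and only if the strictly dominating set of j is already fixed, i.e., Ĝ_j = {k < 2^n : j ≺ k} ⊆ X_s(U). -/
/-- Binary domination: every binary digit of `i` is at most the corresponding digit of `j`. -/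
def bdom (i j : ℕ) : Prop := ∀ t, i.testBit t = true → j.testBit t = true

instance (i j : ℕ) : Decidable (bdom i j) :=
  decidable_of_iff (i ||| j = j) (by
    constructor
    · intro h t hi
      have h1 : (i ||| j).testBit t = j.testBit t := by rw [h]
      rw [Nat.testBit_or, hi, Bool.true_or] at h1
      exact h1.symm
    · intro h
      apply Nat.eq_of_testBit_eq
      intro t
      rw [Nat.testBit_or]
      cases hi : i.testBit t with
      | true => simp [h t hi]
      | false => simp)

/-- Polar encoder `u ↦ u · F₂^{⊗n}` over GF(2), with `F₂ = [[1,0],[1,1]]`: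
`enc 0 u = u`, and `enc (n+1) u` is the concatenation of `enc n (u_L + u_H)`
(on indices `< 2^n`) followed by `enc n u_H` (on indices `2^n, …, 2^(n+1)-1`). -/
def enc : ℕ → (ℕ → ZMod 2) → (ℕ → ZMod 2)
  | 0, u => u
  | n + 1, u => fun j =>
      if j < 2 ^ n then enc n (fun i => u i + u (i + 2 ^ n)) j
      else enc n (fun i => u (i + 2 ^ n)) (j - 2 ^ n)

/-- The fixed bit pattern at the encoder output resulting from shortening the
encoder input bits with indices in `U`. -/
def Xs (n : ℕ) (U : Set ℕ) : Set ℕ :=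
  {j | j < 2 ^ n ∧ ∀ u : ℕ → ZMod 2, (∀ i ∈ U, u i = 0) → enc n u j = 0}

private lemma testBit_add_pow {x n : ℕ} (hx : x < 2 ^ n) (t : ℕ) :
    (x + 2 ^ n).testBit t = if t = n then true else x.testBit t := by
  rcases lt_trichotomy t n with h | h | h
  · rw [if_neg h.ne, Nat.add_comm, Nat.testBit_two_pow_add_gt h]
  · subst h
    rw [if_pos rfl, Nat.add_comm, Nat.testBit_two_pow_add_eq,
      Nat.testBit_eq_false_of_lt hx]
    rfl
  · rw [if_neg h.ne']
    have h1 : x + 2 ^ n < 2 ^ t := by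
      calc x + 2 ^ n < 2 ^ n + 2 ^ n := by omega
      _ = 2 ^ (n + 1) := by ring
      _ ≤ 2 ^ t := Nat.pow_le_pow_right (by norm_num) h
    rw [Nat.testBit_eq_false_of_lt h1,
      Nat.testBit_eq_false_of_lt (lt_of_lt_of_le hx (Nat.pow_le_pow_right (by norm_num) h.le))]

private lemma bdom_iff_add_pow_left {j i n : ℕ} (hj : j < 2 ^ n) (hi : i < 2 ^ n) :
    bdom j (i + 2 ^ n) ↔ bdom j i := by
  constructor <;> intro h t hb
  · have htn : t ≠ n := by
      intro he; subst he
      exact absurd (Nat.testBit_eq_false_of_lt hj) (by simp [hb])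
    have := h t hb
    rwa [testBit_add_pow hi, if_neg htn] at this
  · rw [testBit_add_pow hi]
    split
    · rfl
    · exact h t hb

private lemma bdom_add_pow_both {j i n : ℕ} (hj : j < 2 ^ n) (hi : i < 2 ^ n) :
    bdom (j + 2 ^ n) (i + 2 ^ n) ↔ bdom j i := by
  constructor <;> intro h t hb
  · have htn : t ≠ n := by
      intro he; subst he
      exact absurd (Nat.testBit_eq_false_of_lt hj) (by simp [hb])
    have h2 : (j + 2 ^ n).testBit t = true := by
      rw [testBit_add_pow hj, if_neg htn]; exact hb
    have := h t h2
    rwa [testBit_add_pow hi, if_neg htn] at this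
  · rw [testBit_add_pow hj] at hb
    rw [testBit_add_pow hi]
    by_cases htn : t = n
    · simp [htn]
    · rw [if_neg htn] at hb ⊢
      exact h t hb

private lemma not_bdom_add_pow {j i n : ℕ} (hj : j < 2 ^ n) (hi : i < 2 ^ n) :
    ¬ bdom (j + 2 ^ n) i := by
  intro h
  have hb : (j + 2 ^ n).testBit n = true := by
    rw [testBit_add_pow hj, if_pos rfl]
  have := h n hb
  rw [Nat.testBit_eq_false_of_lt hi] at this
  exact absurd this (by simp)

private lemma enc_eq_sum (n : ℕ) (u : ℕ → ZMod 2) (j : ℕ) (hj : j < 2 ^ n) :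
    enc n u j = ∑ i ∈ Finset.range (2 ^ n), if bdom j i then u i else 0 := by
  induction n generalizing u j with
  | zero =>
    interval_cases j
    simp [enc, bdom]
  | succ n ih =>
    have hsplit : ∀ f : ℕ → ZMod 2, ∑ i ∈ Finset.range (2 ^ (n + 1)), f i =
        ∑ i ∈ Finset.range (2 ^ n), f i + ∑ i ∈ Finset.range (2 ^ n), f (i + 2 ^ n) := by
      intro f
      have h1 : 2 ^ n ≤ 2 ^ (n + 1) := by
        apply Nat.pow_le_pow_right <;> omega
      rw [← Finset.sum_range_add_sum_Ico f h1, Finset.sum_Ico_eq_sum_range,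
        show 2 ^ (n + 1) - 2 ^ n = 2 ^ n by rw [pow_succ]; omega]
      congr 1
      apply Finset.sum_congr rfl
      intro i _
      congr 1
      omega
    rw [hsplit]
    by_cases hlt : j < 2 ^ n
    · show (if j < 2 ^ n then _ else _) = _
      rw [if_pos hlt, ih _ j hlt]
      rw [← Finset.sum_add_distrib]
      apply Finset.sum_congr rfl
      intro i hi
      rw [Finset.mem_range] at hi
      by_cases hb : bdom j i
      · rw [if_pos hb, if_pos hb, if_pos ((bdom_iff_add_pow_left hlt hi).mpr hb)]
      · rw [if_neg hb, if_neg hb,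
          if_neg (fun h => hb ((bdom_iff_add_pow_left hlt hi).mp h))]
        simp
    · have hj' : j - 2 ^ n < 2 ^ n := by
        have : 2 ^ (n + 1) = 2 ^ n + 2 ^ n := by ring
        omega
      have hje : j = (j - 2 ^ n) + 2 ^ n := by omega
      show (if j < 2 ^ n then _ else _) = _
      rw [if_neg hlt, ih _ _ hj']
      have h0 : ∑ i ∈ Finset.range (2 ^ n), (if bdom j i then u i else 0) = 0 := by
        apply Finset.sum_eq_zero
        intro i hi
        rw [Finset.mem_range] at hi
        rw [if_neg]
        intro hc
        rw [hje] at hc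
        exact not_bdom_add_pow hj' hi hc
      rw [h0, zero_add]
      apply Finset.sum_congr rfl
      intro i hi
      rw [Finset.mem_range] at hi
      by_cases hb : bdom (j - 2 ^ n) i
      · have hb2 : bdom j (i + 2 ^ n) := by
          rw [hje]; exact (bdom_add_pow_both hj' hi).mpr hb
        rw [if_pos hb, if_pos hb2]
      · have hb2 : ¬ bdom j (i + 2 ^ n) := by
          rw [hje]; exact fun h => hb ((bdom_add_pow_both hj' hi).mp h)
        rw [if_neg hb, if_neg hb2]

/-- Combinatorial characterization of `Xs`. -/
private lemma mem_Xs_iff {n : ℕ} {U : Set ℕ} {j : ℕ} :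
    j ∈ Xs n U ↔ j < 2 ^ n ∧ ∀ i, i < 2 ^ n → bdom j i → i ∈ U := by
  constructor
  · rintro ⟨hj, h⟩
    refine ⟨hj, fun i hi hbd => ?_⟩
    by_contra hiU
    have := h (fun x => if x = i then 1 else 0) (by
      intro x hx
      simp only [ite_eq_right_iff]
      intro he; subst he; exact absurd hx hiU)
    rw [enc_eq_sum n _ j hj] at this
    rw [Finset.sum_eq_single_of_mem i (Finset.mem_range.mpr hi)] at this
    · simp [hbd] at this
    · intro b _ hbne
      split
      · simp [hbne]
      · rfl
  · rintro ⟨hj, h⟩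
    refine ⟨hj, fun u hu => ?_⟩
    rw [enc_eq_sum n u j hj]
    apply Finset.sum_eq_zero
    intro i hi
    rw [Finset.mem_range] at hi
    split
    · exact hu i (h i hi ‹_›)
    · rfl

/-- for upward-closed `U` and `j ∉ X_s(U)`, output bit `j` can be fixed
by shortening one additional input bit iff every bit strictly dominating `j` is
already fixed. -/
theorem single_extra_shortening_iff (n : ℕ) (U : Set ℕ) (hU : ∀ i ∈ U, i < 2 ^ n)
    (huc : ∀ j ∈ U, ∀ k, k < 2 ^ n → bdom j k → k ∈ U)
    (j : ℕ) (hj : j < 2 ^ n) (hjX : j ∉ Xs n U) :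
    (∃ k, k < 2 ^ n ∧ k ∉ U ∧ j ∈ Xs n (U ∪ {k})) ↔
      ∀ k, k < 2 ^ n → bdom j k → k ≠ j → k ∈ Xs n U := by
  rw [mem_Xs_iff] at hjX
  push_neg at hjX
  obtain ⟨i₀, hi₀, hbd₀, hi₀U⟩ := hjX hj
  constructor
  · rintro ⟨k, hk, hkU, hkX⟩
    rw [mem_Xs_iff] at hkX
    intro m hm hbdm hmj
    rw [mem_Xs_iff]
    refine ⟨hm, fun i hi hbd => ?_⟩
    -- i dominates m which strictly dominates j, so i dominates j
    have hbdji : bdom j i := fun t ht => hbd t (hbdm t ht)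
    have := hkX.2 i hi hbdji
    rcases this with h | h
    · exact h
    · -- i = k; show contradiction by locating j's status
      simp only [Set.mem_singleton_iff] at h
      subst h
      -- j itself: is j in U?
      by_cases hjU : j ∈ U
      · exact huc j hjU i hi hbdji
      · -- then j ∉ U∪{k} unless j = k
        have hjk := hkX.2 j hj (fun t ht => ht)
        rcases hjk with h | h
        · exact absurd h hjU
        · simp only [Set.mem_singleton_iff] at h
          -- j = k = i, but m strictly between j and i with m ≠ j : contradiction
          -- bdom j m? no: we have bdom m i and bdom j m? we have hbdm : bdom j m, hbd : bdom m i = bdom m j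
          subst h
          -- bdom m j and bdom j m implies m = j
          have : m = j := by
            apply Nat.eq_of_testBit_eq
            intro t
            cases hmt : m.testBit t with
            | true => exact (hbd t hmt).symm
            | false =>
              cases hjt : j.testBit t with
              | true => rw [hbdm t hjt] at hmt; exact absurd hmt (by simp)
              | false => rfl
          exact absurd this hmj
  · intro h
    -- all strict dominators of j are in U (since k ∈ Xs U implies k ∈ U)
    have hdomU : ∀ m, m < 2 ^ n → bdom j m → m ≠ j → m ∈ U := by
      intro m hm hbd hmj
      have := h m hm hbd hmj
      rw [mem_Xs_iff] at this
      exact this.2 m hm (fun t ht => ht)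
    -- hence i₀ = j and j ∉ U
    have hij : i₀ = j := by
      by_contra hne
      exact hi₀U (hdomU i₀ hi₀ hbd₀ hne)
    subst hij
    refine ⟨i₀, hi₀, hi₀U, ?_⟩
    rw [mem_Xs_iff]
    refine ⟨hj, fun i hi hbd => ?_⟩
    by_cases hii : i = i₀
    · right; simp [hii]
    · left; exact hdomU i hi hbd hii
end

section
/- For every n ≥ 0, every input vector u : {0,…,2^n−1} → GF(2), and every j < 2^n, the j-th encoder output bit equals the GF(2)-sum of the input bits whose indices dominate j: enc_n(u)_j = Σ_{i < 2^n, j ⪯ i} u_i. Equivalently, the (i, j) entry of F₂^{⊗n} over GF(2) is 1 if j ⪯ i and 0 otherwise. -/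
lemma testBit_false_of_ge {x n t : ℕ} (hx : x < 2 ^ n) (ht : n ≤ t) : x.testBit t = false :=
  Nat.testBit_lt_two_pow (lt_of_lt_of_le hx (Nat.pow_le_pow_right (by norm_num) ht))

lemma bdom_low {n j i : ℕ} (hj : j < 2 ^ n) : bdom j (2 ^ n + i) ↔ bdom j i := by
  constructor
  · intro h t ht
    rcases lt_or_ge t n with htn | htn
    · have := h t ht
      rwa [Nat.testBit_two_pow_add_gt htn] at this
    · simp [testBit_false_of_ge hj htn] at ht
  · intro h t ht
    rcases lt_or_ge t n with htn | htn
    · rw [Nat.testBit_two_pow_add_gt htn]; exact h t ht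
    · simp [testBit_false_of_ge hj htn] at ht

lemma bdom_shift {n j i : ℕ} (hj : j < 2 ^ n) (hi : i < 2 ^ n) :
    bdom (2 ^ n + j) (2 ^ n + i) ↔ bdom j i := by
  have h2 : 2 ^ n + j < 2 ^ (n + 1) := by
    have : 2 ^ (n + 1) = 2 ^ n + 2 ^ n := by ring
    omega
  constructor
  · intro h t ht
    have htn : t < n := by
      by_contra hc
      push_neg at hc
      simp [testBit_false_of_ge hj hc] at ht
    have := h t (by rwa [Nat.testBit_two_pow_add_gt htn])
    rwa [Nat.testBit_two_pow_add_gt htn] at this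
  · intro h t ht
    rcases lt_trichotomy t n with htn | rfl | htn
    · rw [Nat.testBit_two_pow_add_gt htn] at ht ⊢
      exact h t ht
    · rw [Nat.testBit_two_pow_add_eq, testBit_false_of_ge hi le_rfl]; rfl
    · rw [testBit_false_of_ge h2 htn] at ht; exact absurd ht (by simp)

lemma not_bdom_high {n j i : ℕ} (hj : j < 2 ^ n) (hi : i < 2 ^ n) :
    ¬ bdom (2 ^ n + j) i := by
  intro h
  have := h n (by rw [Nat.testBit_two_pow_add_eq, testBit_false_of_ge hj le_rfl]; rfl)
  rw [testBit_false_of_ge hi le_rfl] at this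
  exact absurd this (by simp)

lemma sum_range_split (N : ℕ) (g : ℕ → ZMod 2) :
    ∑ i ∈ Finset.range (N + N), g i
      = ∑ i ∈ Finset.range N, g i + ∑ i ∈ Finset.range N, g (N + i) := by
  have h1 := Finset.sum_Ico_consecutive g (Nat.zero_le N) (Nat.le_add_right N N)
  have h2 : ∑ i ∈ Finset.Ico N (N + N), g i = ∑ i ∈ Finset.range N, g (N + i) := by
    rw [Finset.sum_Ico_eq_sum_range, Nat.add_sub_cancel]
  rw [Finset.range_eq_Ico, ← h1, h2, ← Finset.range_eq_Ico]


/-- the `j`-th encoder output bit is the GF(2)-sum of the input bits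
whose indices dominate `j`; i.e. the `(i,j)` entry of `F₂^{⊗n}` is 1 iff `j ⪯ i`. -/
theorem enc_eq_sum_dominating (n : ℕ) (u : ℕ → ZMod 2) (j : ℕ) (hj : j < 2 ^ n) :
    enc n u j = ∑ i ∈ (Finset.range (2 ^ n)).filter (fun i => bdom j i), u i := by
  induction n generalizing u j with
  | zero =>
    interval_cases j
    rw [Finset.sum_filter]
    simp [enc, bdom, Nat.zero_testBit]
  | succ n ih =>
    have h2 : (2 : ℕ) ^ (n + 1) = 2 ^ n + 2 ^ n := by ring
    rw [Finset.sum_filter, h2, sum_range_split]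
    show enc (n + 1) u j = _
    unfold enc
    split
    · next hjlt =>
      rw [ih _ _ hjlt, Finset.sum_filter]
      have e1 : ∀ i ∈ Finset.range (2 ^ n),
          (if bdom j (2 ^ n + i) then u (2 ^ n + i) else 0)
            = (if bdom j i then u (i + 2 ^ n) else 0) := by
        intro i _
        by_cases h : bdom j i
        · rw [if_pos ((bdom_low hjlt).mpr h), if_pos h, Nat.add_comm]
        · rw [if_neg (fun hc => h ((bdom_low hjlt).mp hc)), if_neg h]
      rw [Finset.sum_congr rfl e1, ← Finset.sum_add_distrib]
      refine Finset.sum_congr rfl fun i _ => ?_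
      by_cases h : bdom j i <;> simp [h]
    · next hjge =>
      push_neg at hjge
      have hj' : j - 2 ^ n < 2 ^ n := by omega
      have hjeq : j = 2 ^ n + (j - 2 ^ n) := by omega
      rw [ih _ _ hj', Finset.sum_filter]
      have e0 : ∀ i ∈ Finset.range (2 ^ n),
          (if bdom j i then u i else 0) = 0 := by
        intro i hi
        rw [Finset.mem_range] at hi
        rw [if_neg (by rw [hjeq]; exact not_bdom_high hj' hi)]
      have e1 : ∀ i ∈ Finset.range (2 ^ n),
          (if bdom j (2 ^ n + i) then u (2 ^ n + i) else 0)
            = (if bdom (j - 2 ^ n) i then u (i + 2 ^ n) else 0) := by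
        intro i hi
        rw [Finset.mem_range] at hi
        have hb := bdom_shift hj' hi
        rw [← hjeq] at hb
        by_cases h : bdom (j - 2 ^ n) i
        · rw [if_pos (hb.mpr h), if_pos h, Nat.add_comm]
        · rw [if_neg (fun hc => h (hb.mp hc)), if_neg h]
      rw [Finset.sum_congr rfl e0, Finset.sum_congr rfl e1]
      simp
end
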